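/- Let θ > 1 be real. There exist positive integers k, ℓ, and n₀ > log θ / log 2 such that M_θ(n + k) = M_θ(n) + ℓ for all integers n ≥ n₀ (i.e., M_θ is eventually linearly periodic) if and only if there exist positive integers k and ℓ such that θ = e^{k/ℓ}. -/

import Mathlib

open Real

/-- `M θ n = ⌊1 / {θ^(1/n)}⌋`, the integer part of the reciprocal of the
fractional part of the `n`-th root of `θ`. -/
noncomputable def M (θ : ℝ) (n : ℕ) : ℤ := ⌊1 / Int.fract (θ ^ ((n : ℝ)⁻¹))⌋

lemma exp_taylor4 {x : ℝ} (h0 : 0 < x) (h1 : x ≤ 1) :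
    |Real.exp x - (1 + x + x^2/2 + x^3/6)| ≤ 5*x^4/96 := by
  have h := Real.exp_bound (x := x) (by rw [abs_of_pos h0]; exact h1) (n := 4) (by norm_num)
  have hs : ∑ m ∈ Finset.range 4, x ^ m / (m.factorial : ℝ) = 1 + x + x^2/2 + x^3/6 := by
    norm_num [Finset.sum_range_succ, Nat.factorial]
  rw [hs, abs_of_pos h0] at h
  calc |Real.exp x - (1 + x + x^2/2 + x^3/6)| ≤ x^4 * ((4:ℕ).succ / ((4:ℕ).factorial * (4:ℕ))) := h
    _ = 5*x^4/96 := by norm_num [Nat.factorial]; ring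

lemma inv_bounds {x : ℝ} (h0 : 0 < x) (h1 : x ≤ 1) :
    1/x - 1/2 < 1/(Real.exp x - 1) ∧ 1/(Real.exp x - 1) ≤ 1/x - 1/2 + x := by
  have ht := exp_taylor4 h0 h1
  rw [abs_le] at ht
  obtain ⟨hlo, hhi⟩ := ht
  have hE : 0 < Real.exp x - 1 := by
    have := Real.add_one_lt_exp (by positivity : x ≠ 0)
    linarith
  constructor
  · have key : (Real.exp x - 1) * (2 - x) < 1 * (2 * x) := by
      nlinarith [pow_pos h0 3, pow_pos h0 4, sq_nonneg x]
    have h2 : 1/x - 1/2 = (2 - x) / (2 * x) := by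
      rw [eq_div_iff (by positivity)]; field_simp
    rw [h2, div_lt_div_iff₀ (by positivity) hE]
    linarith [key]
  · have key : 1 * (2 * x) ≤ (Real.exp x - 1) * (2 - x + 2*x^2) := by
      nlinarith [pow_pos h0 3, pow_pos h0 4,
        mul_nonneg (pow_nonneg h0.le 4) (sub_nonneg.2 (pow_le_one₀ h0.le h1 : x^2 ≤ 1))]
    have h2 : 1/x - 1/2 + x = (2 - x + 2*x^2) / (2 * x) := by
      rw [eq_div_iff (by positivity)]; field_simp
    rw [h2, div_le_div_iff₀ hE (by positivity)]
    linarith [key]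

lemma floor_ratio_add {a b : ℤ} (hb : 0 < b) {δ : ℝ} (h0 : 0 ≤ δ) (h1 : δ < 1/(b:ℝ)) :
    ⌊(a:ℝ)/(b:ℝ) + δ⌋ = a / b := by
  have hbR : (0:ℝ) < b := by exact_mod_cast hb
  rw [Int.floor_eq_iff]
  constructor
  · have h2 : ((a / b : ℤ) : ℝ) * b ≤ a := by exact_mod_cast Int.ediv_mul_le a hb.ne'
    have h3 := (le_div_iff₀ hbR).2 h2
    linarith
  · have h3 : (a:ℝ) ≤ (((a / b : ℤ) : ℝ) + 1) * b - 1 := by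
      have h := Int.lt_iff_add_one_le.mp (Int.lt_ediv_add_one_mul_self a hb)
      have h' : (a:ℝ) + 1 ≤ (((a / b : ℤ) : ℝ) + 1) * b := by exact_mod_cast h
      linarith
    have h4 : (a:ℝ)/b ≤ ((a / b : ℤ) : ℝ) + 1 - 1/b := by
      rw [div_le_iff₀ hbR]
      have h5 : (1/(b:ℝ))*b = 1 := one_div_mul_cancel hbR.ne'
      nlinarith
    linarith

lemma M_eq {θ : ℝ} (hθ : 1 < θ) {n : ℕ} (hn : 0 < n)
    (h2 : Real.log θ / n < Real.log 2) :
    M θ n = ⌊1/(Real.exp (Real.log θ / n) - 1)⌋ := by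
  have hθ0 : 0 < θ := lt_trans one_pos hθ
  have hrw : θ ^ ((n:ℝ)⁻¹) = Real.exp (Real.log θ / n) := by
    rw [Real.rpow_def_of_pos hθ0, div_eq_mul_inv]
  have hL : 0 < Real.log θ := Real.log_pos hθ
  have hnR : (0:ℝ) < n := by exact_mod_cast hn
  have h1 : 1 < Real.exp (Real.log θ / n) := by
    rw [← Real.exp_zero]
    exact Real.exp_lt_exp.2 (by positivity)
  have h2' : Real.exp (Real.log θ / n) < 2 := by
    rw [show (2:ℝ) = Real.exp (Real.log 2) from (Real.exp_log two_pos).symm]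
    exact Real.exp_lt_exp.2 h2
  have hfl : ⌊Real.exp (Real.log θ / n)⌋ = 1 :=
    Int.floor_eq_iff.2 ⟨by push_cast; linarith, by push_cast; linarith⟩
  unfold M
  rw [hrw, Int.fract, hfl]
  norm_num

/-- Main structural lemma: for large `n`, `M θ n = ⌊n/L - 1/2 + δ⌋` with
`0 < δ ≤ L/n`, where `L = log θ`. -/
lemma M_struct {θ : ℝ} (hθ : 1 < θ) {n : ℕ} (hn : 0 < n)
    (hx1 : Real.log θ ≤ n) (h2 : Real.log θ / n < Real.log 2) :
    ∃ δ : ℝ, 0 < δ ∧ δ ≤ Real.log θ / n ∧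
      M θ n = ⌊(n:ℝ)/Real.log θ - 1/2 + δ⌋ := by
  have hL : 0 < Real.log θ := Real.log_pos hθ
  have hnR : (0:ℝ) < n := by exact_mod_cast hn
  set x : ℝ := Real.log θ / n with hxdef
  have hx0 : 0 < x := by positivity
  have hxle : x ≤ 1 := by
    rw [hxdef, div_le_one hnR]; exact hx1
  have hinv : 1/x = (n:ℝ)/Real.log θ := by
    rw [hxdef, one_div_div]
  obtain ⟨hb1, hb2⟩ := inv_bounds hx0 hxle
  refine ⟨1/(Real.exp x - 1) - ((n:ℝ)/Real.log θ - 1/2), ?_, ?_, ?_⟩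
  · rw [← hinv]; linarith
  · rw [← hinv]; linarith
  · rw [M_eq hθ hn h2]
    congr 1
    ring

theorem stmt_15 (θ : ℝ) (hθ : 1 < θ) :
    (∃ k ℓ n₀ : ℕ, 0 < k ∧ 0 < ℓ ∧ (n₀ : ℝ) > Real.log θ / Real.log 2 ∧
      ∀ n : ℕ, n₀ ≤ n → M θ (n + k) = M θ n + (ℓ : ℤ)) ↔
    (∃ k ℓ : ℕ, 0 < k ∧ 0 < ℓ ∧ θ = Real.exp ((k : ℝ) / (ℓ : ℝ))) := by
  have hθ0 : 0 < θ := lt_trans one_pos hθ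
  have hL : 0 < Real.log θ := Real.log_pos hθ
  have hlog2 : 0 < Real.log 2 := Real.log_pos one_lt_two
  set L : ℝ := Real.log θ with hLdef
  constructor
  · rintro ⟨k, ℓ, n₀, hk, hl, hgt, hM⟩
    refine ⟨k, ℓ, hk, hl, ?_⟩
    have hkR : (0:ℝ) < k := by exact_mod_cast hk
    have hlR : (0:ℝ) < ℓ := by exact_mod_cast hl
    set N : ℕ := n₀ ⊔ (⌈(L / Real.log 2) ⊔ L⌉₊ + 1) with hNdef
    have hNn₀ : n₀ ≤ N := le_max_left _ _
    have hNbig : ∀ n : ℕ, N ≤ n → (L / Real.log 2) ⊔ L < (n:ℝ) := by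
      intro n hn
      have h1 : (⌈(L / Real.log 2) ⊔ L⌉₊ + 1 : ℕ) ≤ n := le_trans (le_max_right _ _) hn
      have h2 : ((⌈(L / Real.log 2) ⊔ L⌉₊ + 1 : ℕ) : ℝ) ≤ n := by exact_mod_cast h1
      have h3 := Nat.le_ceil ((L / Real.log 2) ⊔ L)
      push_cast at h2
      linarith
    have hbound : ∀ n : ℕ, N ≤ n → |(M θ n : ℝ) - n/L| ≤ 3/2 := by
      intro n hn
      have hmax := hNbig n hn
      have hmax1 : L / Real.log 2 < n := lt_of_le_of_lt (le_max_left _ _) hmax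
      have hmax2 : L < n := lt_of_le_of_lt (le_max_right _ _) hmax
      have hnN : 0 < (n:ℝ) := by linarith [hL, hmax2]
      have hn0 : 0 < n := by exact_mod_cast hnN
      have hdiv : L / n < Real.log 2 := by
        rw [div_lt_iff₀ hnN]
        rw [div_lt_iff₀ hlog2] at hmax1
        linarith
      obtain ⟨δ, hδ0, hδle, hMf⟩ := M_struct hθ hn0 hmax2.le hdiv
      have hfl1 : (M θ n : ℝ) ≤ (n:ℝ)/L - 1/2 + δ := by rw [hMf]; exact Int.floor_le _
      have hfl2 : (n:ℝ)/L - 1/2 + δ - 1 < (M θ n : ℝ) := by rw [hMf]; exact Int.sub_one_lt_floor _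
      have hδ1 : δ ≤ 1 := le_trans hδle (by rw [div_le_one hnN]; linarith)
      rw [abs_le]
      constructor <;> linarith
    have hiter : ∀ m : ℕ, M θ (N + m*k) = M θ N + (m:ℤ)*(ℓ:ℤ) := by
      intro m
      induction m with
      | zero => simp
      | succ m ih =>
        have h1 : N + (m+1)*k = (N + m*k) + k := by ring
        have h2 := hM (N + m*k) (le_trans hNn₀ (Nat.le_add_right _ _))
        rw [h1, h2, ih]
        push_cast
        ring
    have habs : ∀ m : ℕ, (m:ℝ) * |(ℓ:ℝ) - (k:ℝ)/L| ≤ 3 := by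
      intro m
      have h1 := hbound (N + m*k) (Nat.le_add_right _ _)
      rw [hiter m] at h1
      have h2 := hbound N le_rfl
      have heq : (m:ℝ) * ((ℓ:ℝ) - (k:ℝ)/L) =
          ((M θ N : ℝ) + (m:ℝ)*(ℓ:ℝ) - ((N:ℝ) + (m:ℝ)*(k:ℝ))/L) - ((M θ N : ℝ) - (N:ℝ)/L) := by
        field_simp
        ring
      have h1' : |(M θ N : ℝ) + (m:ℝ)*(ℓ:ℝ) - ((N:ℝ) + (m:ℝ)*(k:ℝ))/L| ≤ 3/2 := by
        have : ((M θ N + (m:ℤ)*(ℓ:ℤ) : ℤ) : ℝ) = (M θ N : ℝ) + (m:ℝ)*(ℓ:ℝ) := by push_cast; ring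
        have h3 : ((N + m*k : ℕ) : ℝ) = (N:ℝ) + (m:ℝ)*(k:ℝ) := by push_cast; ring
        rw [this, h3] at h1
        exact h1
      calc (m:ℝ) * |(ℓ:ℝ) - (k:ℝ)/L| = |(m:ℝ) * ((ℓ:ℝ) - (k:ℝ)/L)| := by
            rw [abs_mul, abs_of_nonneg (by positivity : (0:ℝ) ≤ (m:ℝ))]
        _ = |((M θ N : ℝ) + (m:ℝ)*(ℓ:ℝ) - ((N:ℝ) + (m:ℝ)*(k:ℝ))/L) - ((M θ N : ℝ) - (N:ℝ)/L)| := by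
            rw [heq]
        _ ≤ 3/2 + 3/2 := le_trans (abs_sub _ _) (add_le_add h1' h2)
        _ = 3 := by norm_num
    have hc : (ℓ:ℝ) - (k:ℝ)/L = 0 := by
      by_contra h
      have habs0 : 0 < |(ℓ:ℝ) - (k:ℝ)/L| := abs_pos.2 h
      obtain ⟨m, hm⟩ := exists_nat_gt (3 / |(ℓ:ℝ) - (k:ℝ)/L|)
      have : 3 < (m:ℝ) * |(ℓ:ℝ) - (k:ℝ)/L| := by
        rw [div_lt_iff₀ habs0] at hm
        linarith
      linarith [habs m]
    have hLval : L = (k:ℝ)/(ℓ:ℝ) := by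
      have h1 : (ℓ:ℝ) = (k:ℝ)/L := by linarith
      field_simp at h1 ⊢
      linarith [h1]
    rw [← hLval, hLdef, Real.exp_log hθ0]
  · rintro ⟨k, ℓ, hk, hl, hθval⟩
    have hkR : (0:ℝ) < k := by exact_mod_cast hk
    have hlR : (0:ℝ) < ℓ := by exact_mod_cast hl
    have hLval : L = (k:ℝ)/(ℓ:ℝ) := by rw [hLdef, hθval, Real.log_exp]
    set c : ℝ := (L / Real.log 2) ⊔ (L ⊔ (2*(k:ℝ)*L)) with hcdef
    set n₀ : ℕ := ⌈c⌉₊ + 1 with hn₀def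
    have hn₀big : ∀ n : ℕ, n₀ ≤ n → c < (n:ℝ) := by
      intro n hn
      have h2 : ((⌈c⌉₊ + 1 : ℕ) : ℝ) ≤ n := by exact_mod_cast hn
      have h3 := Nat.le_ceil c
      push_cast at h2
      linarith
    have key : ∀ n : ℕ, n₀ ≤ n → M θ n = (2*(n:ℤ)*(ℓ:ℤ) - (k:ℤ)) / (2*(k:ℤ)) := by
      intro n hn
      have hmax := hn₀big n hn
      have hm1 : L / Real.log 2 < n := lt_of_le_of_lt (le_max_left _ _) hmax
      have hm2 : L < n := lt_of_le_of_lt (le_trans (le_max_left _ _) (le_max_right _ _)) hmax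
      have hm3 : 2*(k:ℝ)*L < n := lt_of_le_of_lt (le_trans (le_max_right _ _) (le_max_right _ _)) hmax
      have hnN : 0 < (n:ℝ) := by linarith
      have hn0 : 0 < n := by exact_mod_cast hnN
      have hdiv : L / n < Real.log 2 := by
        rw [div_lt_iff₀ hnN]
        rw [div_lt_iff₀ hlog2] at hm1
        linarith
      obtain ⟨δ, hδ0, hδle, hMf⟩ := M_struct hθ hn0 hm2.le hdiv
      have hδlt : δ < 1/((2*(k:ℤ) : ℤ) : ℝ) := by
        have h1 : L / n < 1/(2*(k:ℝ)) := by
          rw [div_lt_div_iff₀ hnN (by positivity)]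
          nlinarith
        push_cast
        linarith [lt_of_le_of_lt hδle h1]
      have heq : (n:ℝ)/L - 1/2 = ((2*(n:ℤ)*(ℓ:ℤ) - (k:ℤ) : ℤ) : ℝ)/((2*(k:ℤ) : ℤ) : ℝ) := by
        push_cast
        rw [hLval]
        field_simp
      rw [hMf, heq]
      exact floor_ratio_add (by positivity) hδ0.le hδlt
    refine ⟨k, ℓ, n₀, hk, hl, ?_, ?_⟩
    · have h3 := Nat.le_ceil c
      have : L / Real.log 2 ≤ c := le_max_left _ _
      rw [hn₀def]
      push_cast
      linarith
    · intro n hn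
      have h1 := key n hn
      have h2 := key (n + k) (le_trans hn (Nat.le_add_right _ _))
      rw [h1, h2]
      have heq : 2*((n:ℤ)+(k:ℤ))*(ℓ:ℤ) - (k:ℤ) = (2*(n:ℤ)*(ℓ:ℤ) - (k:ℤ)) + (ℓ:ℤ)*(2*(k:ℤ)) := by ring
      have : ((n + k : ℕ) : ℤ) = (n:ℤ) + (k:ℤ) := by push_cast; ring
      rw [this, heq, Int.add_mul_ediv_right _ _ (by positivity : (2*(k:ℤ)) ≠ 0)]
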